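/- Let V be a finite-dimensional complex vector space, X ⊂ H ⊂ V with dim X = 1 and H a hyperplane. Let D¹ = Hom(X, H/X) ⊕ Hom(H/X, V/H) and ℐ′ = {[ζ ⊕ η] ∈ ℙ(D¹) : ζ ≠ 0, η ≠ 0, η ∘ ζ = 0}. Then the group Q = {A ∈ GL(V) : A(X) = X, A(H) = H}, acting by A·(ζ ⊕ η) = (AζA⁻¹) ⊕ (AηA⁻¹), acts transitively on ℐ′. -/

import Mathlib

open Module Submodule



/-- IsCompl of kernel of a nonvanishing functional and the span of a vector where it
doesn't vanish. -/
lemma aux_isCompl_ker_span {W : Type*} [AddCommGroup W] [Module ℂ W]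
    (φ : W →ₗ[ℂ] ℂ) (u : W) (hu : φ u ≠ 0) :
    IsCompl (LinearMap.ker φ) (Submodule.span ℂ {u}) := by
  constructor
  · rw [disjoint_iff, eq_bot_iff]
    rintro x ⟨hx1, hx2⟩
    obtain ⟨a, rfl⟩ := Submodule.mem_span_singleton.1 hx2
    have : a * φ u = 0 := by simpa using hx1
    rcases mul_eq_zero.1 this with h | h
    · simp [h]
    · exact absurd h hu
  · rw [codisjoint_iff, eq_top_iff]
    intro w _
    have hk : w - (φ w / φ u) • u ∈ LinearMap.ker φ := by
      simp [LinearMap.mem_ker, div_mul_cancel₀ _ hu, mul_comm]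
    refine Submodule.mem_sup.2 ⟨_, hk, (φ w / φ u) • u,
      Submodule.smul_mem _ _ (Submodule.mem_span_singleton_self u), by abel⟩

/-- Two finite-dimensional spaces of the same rank with chosen nonzero vectors are
equivalent by an equivalence matching the vectors. -/
lemma aux_equiv_of_ne_zero {M₁ M₂ : Type*} [AddCommGroup M₁] [Module ℂ M₁]
    [AddCommGroup M₂] [Module ℂ M₂] [FiniteDimensional ℂ M₁] [FiniteDimensional ℂ M₂]
    (hrank : finrank ℂ M₁ = finrank ℂ M₂) {x₁ : M₁} {x₂ : M₂}
    (h₁ : x₁ ≠ 0) (h₂ : x₂ ≠ 0) : ∃ g : M₁ ≃ₗ[ℂ] M₂, g x₁ = x₂ := by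
  obtain ⟨C₁, hC₁⟩ := (Submodule.span ℂ {x₁}).exists_isCompl
  obtain ⟨C₂, hC₂⟩ := (Submodule.span ℂ {x₂}).exists_isCompl
  have hd : finrank ℂ C₁ = finrank ℂ C₂ := by
    have e1 := Submodule.finrank_add_eq_of_isCompl hC₁
    have e2 := Submodule.finrank_add_eq_of_isCompl hC₂
    rw [finrank_span_singleton h₁] at e1
    rw [finrank_span_singleton h₂] at e2
    omega
  let s₁ := LinearEquiv.toSpanNonzeroSingleton ℂ M₁ x₁ h₁
  let s₂ := LinearEquiv.toSpanNonzeroSingleton ℂ M₂ x₂ h₂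
  let g : M₁ ≃ₗ[ℂ] M₂ :=
    (Submodule.prodEquivOfIsCompl _ _ hC₁).symm.trans
      (((s₁.symm.trans s₂).prodCongr (LinearEquiv.ofFinrankEq _ _ hd)).trans
        (Submodule.prodEquivOfIsCompl _ _ hC₂))
  refine ⟨g, ?_⟩
  have hx₁ : (Submodule.prodEquivOfIsCompl _ _ hC₁).symm x₁ =
      (⟨x₁, Submodule.mem_span_singleton_self x₁⟩, 0) := by
    rw [LinearEquiv.symm_apply_eq, Submodule.coe_prodEquivOfIsCompl']
    simp
  have hs : (s₁.symm.trans s₂) ⟨x₁, Submodule.mem_span_singleton_self x₁⟩ =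
      ⟨x₂, Submodule.mem_span_singleton_self x₂⟩ := by
    have h1 : s₁ 1 = ⟨x₁, Submodule.mem_span_singleton_self x₁⟩ := by
      apply Subtype.ext; simp [s₁]
    have h2 : s₂ 1 = ⟨x₂, Submodule.mem_span_singleton_self x₂⟩ := by
      apply Subtype.ext; simp [s₂]
    simp [LinearEquiv.trans_apply, ← h1, ← h2]
  simp only [g, LinearEquiv.trans_apply, hx₁, LinearEquiv.prodCongr_apply, map_zero]
  rw [Submodule.coe_prodEquivOfIsCompl']
  simp only [LinearEquiv.trans_apply] at hs
  simp [hs]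

lemma aux_glue {W₁ W₂ : Type*} [AddCommGroup W₁] [Module ℂ W₁]
    [AddCommGroup W₂] [Module ℂ W₂]
    {p₁ q₁ : Submodule ℂ W₁} {p₂ q₂ : Submodule ℂ W₂}
    (h₁ : IsCompl p₁ q₁) (h₂ : IsCompl p₂ q₂)
    (gp : p₁ ≃ₗ[ℂ] p₂) (gq : q₁ ≃ₗ[ℂ] q₂) :
    ∃ F : W₁ ≃ₗ[ℂ] W₂, (∀ x : p₁, F x = gp x) ∧ (∀ y : q₁, F y = gq y) := by
  refine ⟨(Submodule.prodEquivOfIsCompl _ _ h₁).symm.trans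
    ((gp.prodCongr gq).trans (Submodule.prodEquivOfIsCompl _ _ h₂)), ?_, ?_⟩
  · intro x
    simp only [LinearEquiv.trans_apply, Submodule.prodEquivOfIsCompl_symm_apply_left,
      LinearEquiv.prodCongr_apply, Prod.map_apply, map_zero]
    rw [Submodule.coe_prodEquivOfIsCompl']
    simp
  · intro y
    simp only [LinearEquiv.trans_apply, Submodule.prodEquivOfIsCompl_symm_apply_right,
      LinearEquiv.prodCongr_apply, Prod.map_apply, map_zero]
    rw [Submodule.coe_prodEquivOfIsCompl']
    simp

lemma aux_conj {W U : Type*} [AddCommGroup W] [Module ℂ W] [FiniteDimensional ℂ W]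
    [AddCommGroup U] [Module ℂ U] [FiniteDimensional ℂ U] (hU : finrank ℂ U = 1)
    (φ₁ φ₂ : W →ₗ[ℂ] U) (hφ₁ : φ₁ ≠ 0) (hφ₂ : φ₂ ≠ 0)
    {w₁ w₂ : W} (hw₁ : w₁ ≠ 0) (hw₂ : w₂ ≠ 0)
    (h₁ : φ₁ w₁ = 0) (h₂ : φ₂ w₂ = 0) :
    ∃ f : W ≃ₗ[ℂ] W, f w₁ = w₂ ∧ φ₂ ∘ₗ f.toLinearMap = φ₁ := by
  let ι : U ≃ₗ[ℂ] ℂ := LinearEquiv.ofFinrankEq U ℂ (by simp [hU])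
  set ψ₁ : W →ₗ[ℂ] ℂ := ι.toLinearMap ∘ₗ φ₁ with hψ₁
  set ψ₂ : W →ₗ[ℂ] ℂ := ι.toLinearMap ∘ₗ φ₂ with hψ₂
  obtain ⟨u₁, hu₁⟩ : ∃ u, ψ₁ u ≠ 0 := by
    by_contra hcon
    push_neg at hcon
    apply hφ₁
    ext w
    have := hcon w
    simp only [hψ₁, LinearMap.comp_apply] at this
    simpa using ι.injective (by simpa using this)
  obtain ⟨u, hu⟩ : ∃ u, ψ₂ u ≠ 0 := by
    by_contra hcon
    push_neg at hcon
    apply hφ₂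
    ext w
    have := hcon w
    simp only [hψ₂, LinearMap.comp_apply] at this
    simpa using ι.injective (by simpa using this)
  obtain ⟨u₂, hψu₂⟩ : ∃ u₂, ψ₂ u₂ = ψ₁ u₁ :=
    ⟨(ψ₁ u₁ / ψ₂ u) • u, by simp [div_mul_cancel₀ _ hu]⟩
  have hu₂ : ψ₂ u₂ ≠ 0 := by rw [hψu₂]; exact hu₁
  have hun₁ : u₁ ≠ 0 := fun h => hu₁ (by simp [h])
  have hun₂ : u₂ ≠ 0 := fun h => hu₂ (by simp [h])
  have hw₁K : w₁ ∈ LinearMap.ker ψ₁ := by simp [hψ₁, LinearMap.mem_ker, h₁]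
  have hw₂K : w₂ ∈ LinearMap.ker ψ₂ := by simp [hψ₂, LinearMap.mem_ker, h₂]
  have hcpl₁ := aux_isCompl_ker_span ψ₁ u₁ hu₁
  have hcpl₂ := aux_isCompl_ker_span ψ₂ u₂ hu₂
  have hrk : finrank ℂ (LinearMap.ker ψ₁) = finrank ℂ (LinearMap.ker ψ₂) := by
    have e1 := Submodule.finrank_add_eq_of_isCompl hcpl₁
    have e2 := Submodule.finrank_add_eq_of_isCompl hcpl₂
    rw [finrank_span_singleton hun₁] at e1
    rw [finrank_span_singleton hun₂] at e2
    omega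
  obtain ⟨gK, hgK⟩ := aux_equiv_of_ne_zero hrk
    (x₁ := (⟨w₁, hw₁K⟩ : LinearMap.ker ψ₁)) (x₂ := (⟨w₂, hw₂K⟩ : LinearMap.ker ψ₂))
    (fun h => hw₁ (by simpa using congrArg Subtype.val h))
    (fun h => hw₂ (by simpa using congrArg Subtype.val h))
  let s₁ := LinearEquiv.toSpanNonzeroSingleton ℂ W u₁ hun₁
  let s₂ := LinearEquiv.toSpanNonzeroSingleton ℂ W u₂ hun₂
  obtain ⟨f, hfp, hfq⟩ := aux_glue hcpl₁ hcpl₂ gK (s₁.symm.trans s₂)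
  have hfw : f w₁ = w₂ := by
    have := hfp ⟨w₁, hw₁K⟩
    rw [this, hgK]
  have hfu : f u₁ = u₂ := by
    have hmem : u₁ ∈ Submodule.span ℂ {u₁} := Submodule.mem_span_singleton_self u₁
    have := hfq ⟨u₁, hmem⟩
    rw [this]
    have e1 : s₁ 1 = ⟨u₁, hmem⟩ := Subtype.ext (by simp [s₁])
    have : (s₁.symm.trans s₂) ⟨u₁, hmem⟩ = s₂ 1 := by
      rw [LinearEquiv.trans_apply, ← e1, LinearEquiv.symm_apply_apply]
    rw [this]
    simp [s₂]
  have key : ψ₂ ∘ₗ f.toLinearMap = ψ₁ := by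
    apply LinearMap.ext_on_codisjoint hcpl₁.codisjoint
    · intro x hx
      have hthis : f x = ((gK ⟨x, hx⟩ : LinearMap.ker ψ₂) : W) := hfp ⟨x, hx⟩
      simp only [LinearMap.comp_apply, LinearEquiv.coe_coe]
      rw [hthis]
      have h0 : ψ₂ ((gK ⟨x, hx⟩ : LinearMap.ker ψ₂) : W) = 0 := (gK ⟨x, hx⟩).2
      rw [h0]
      exact (LinearMap.mem_ker.1 hx).symm
    · intro y hy
      obtain ⟨a, ha⟩ := Submodule.mem_span_singleton.1 hy
      simp only [LinearMap.comp_apply, LinearEquiv.coe_coe]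
      rw [← ha, map_smul, map_smul, hfu, map_smul, hψu₂]
  refine ⟨f, hfw, ?_⟩
  ext w
  have : ψ₂ (f w) = ψ₁ w := by rw [← key]; rfl
  simp only [hψ₁, hψ₂, LinearMap.comp_apply] at this
  exact ι.injective this

/-- let `X ⊂ H ⊂ V` with `dim X = 1` and `H` a hyperplane.  The stabilizer
`Q ⊂ GL(V)` of the flag, acting by conjugation on
`D¹ = Hom(X, H/X) ⊕ Hom(H/X, V/H)`, acts transitively on the projectivized set
`ℐ′ = {[ζ ⊕ η] : ζ ≠ 0, η ≠ 0, η ∘ ζ = 0}`: any two such pairs differ by an element of `Q`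
(acting through the induced maps on `X`, `H/X`, `V/H`) up to a scalar. -/
theorem stmt9 {V : Type*} [AddCommGroup V] [Module ℂ V] [FiniteDimensional ℂ V]
    (X H : Submodule ℂ V) (hXH : X ≤ H)
    (hX : Module.finrank ℂ X = 1)
    (hH : Module.finrank ℂ H + 1 = Module.finrank ℂ V)
    (hV : 3 ≤ Module.finrank ℂ V)
    (ζ₁ ζ₂ : X →ₗ[ℂ] (H ⧸ X.comap H.subtype))
    (η₁ η₂ : (H ⧸ X.comap H.subtype) →ₗ[ℂ] (V ⧸ H))
    (hζ₁ : ζ₁ ≠ 0) (hζ₂ : ζ₂ ≠ 0) (hη₁ : η₁ ≠ 0) (hη₂ : η₂ ≠ 0)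
    (hc₁ : η₁ ∘ₗ ζ₁ = 0) (hc₂ : η₂ ∘ₗ ζ₂ = 0) :
    ∃ (e : V ≃ₗ[ℂ] V) (eX : X ≃ₗ[ℂ] X) (eH : H ≃ₗ[ℂ] H)
      (eHX : (H ⧸ X.comap H.subtype) ≃ₗ[ℂ] (H ⧸ X.comap H.subtype))
      (eVH : (V ⧸ H) ≃ₗ[ℂ] (V ⧸ H)) (c : ℂˣ),
      (∀ x : X, (eX x : V) = e (x : V)) ∧
      (∀ h : H, (eH h : V) = e (h : V)) ∧
      (∀ h : H, eHX ((X.comap H.subtype).mkQ h) = (X.comap H.subtype).mkQ (eH h)) ∧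
      (∀ v : V, eVH (H.mkQ v) = H.mkQ (e v)) ∧
      ζ₂ = (c : ℂ) • (eHX.toLinearMap ∘ₗ ζ₁ ∘ₗ eX.symm.toLinearMap) ∧
      η₂ = (c : ℂ) • (eVH.toLinearMap ∘ₗ η₁ ∘ₗ eHX.symm.toLinearMap) := by
  -- dimension facts
  have hVH1 : finrank ℂ (V ⧸ H) = 1 := by
    have := H.finrank_quotient_add_finrank
    omega
  -- a generator of X
  obtain ⟨x₀, hx₀, hx₀span⟩ := finrank_eq_one_iff'.1 hX
  have hw₁ : ζ₁ x₀ ≠ 0 := by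
    intro h
    apply hζ₁
    refine LinearMap.ext fun x => ?_
    obtain ⟨cc, rfl⟩ := hx₀span x
    rw [map_smul, h, smul_zero]
    rfl
  have hw₂ : ζ₂ x₀ ≠ 0 := by
    intro h
    apply hζ₂
    refine LinearMap.ext fun x => ?_
    obtain ⟨cc, rfl⟩ := hx₀span x
    rw [map_smul, h, smul_zero]
    rfl
  have hη₁w₁ : η₁ (ζ₁ x₀) = 0 := by
    have := LinearMap.congr_fun hc₁ x₀
    simpa using this
  have hη₂w₂ : η₂ (ζ₂ x₀) = 0 := by
    have := LinearMap.congr_fun hc₂ x₀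
    simpa using this
  -- the equivalence of the middle quotient
  obtain ⟨f, hfw, hfcomp⟩ := aux_conj hVH1 η₁ η₂ hη₁ hη₂ hw₁ hw₂ hη₁w₁ hη₂w₂
  -- build eH
  obtain ⟨C, hC⟩ := (X.comap H.subtype).exists_isCompl
  obtain ⟨eH, heHp, heHq⟩ := aux_glue hC hC (LinearEquiv.refl ℂ (X.comap H.subtype))
    (((Submodule.quotientEquivOfIsCompl _ C hC).symm.trans f).trans
      (Submodule.quotientEquivOfIsCompl _ C hC))
  -- eH fixes X' pointwise
  have heHX' : ∀ x : H, x ∈ X.comap H.subtype → eH x = x := by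
    intro x hx
    have := heHp ⟨x, hx⟩
    simpa using this
  -- eH induces f on the quotient
  have hP2 : ∀ h : H, f ((X.comap H.subtype).mkQ h) = (X.comap H.subtype).mkQ (eH h) := by
    have hmaps : f.toLinearMap ∘ₗ (X.comap H.subtype).mkQ
        = (X.comap H.subtype).mkQ ∘ₗ eH.toLinearMap := by
      apply LinearMap.ext_on_codisjoint hC.codisjoint
      · intro x hx
        have h0 : (X.comap H.subtype).mkQ x = 0 := (Submodule.Quotient.mk_eq_zero _).2 hx
        have h1 : eH x = x := heHX' x hx
        simp only [LinearMap.comp_apply, LinearEquiv.coe_coe, h0, map_zero, h1]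
      · intro y hy
        have hq : eH y = ((Submodule.quotientEquivOfIsCompl _ C hC
            (f ((Submodule.quotientEquivOfIsCompl _ C hC).symm ⟨y, hy⟩))) : H) := by
          have := heHq ⟨y, hy⟩
          simpa using this
        simp only [LinearMap.comp_apply, LinearEquiv.coe_coe, hq]
        simp only [Submodule.mkQ_apply]
        rw [Submodule.mk_quotientEquivOfIsCompl_apply,
          Submodule.quotientEquivOfIsCompl_symm_apply]
    intro h
    exact (LinearMap.congr_fun hmaps h)
  -- build e
  obtain ⟨L, hL⟩ := H.exists_isCompl
  obtain ⟨e, hep, heq⟩ := aux_glue hL hL eH (LinearEquiv.refl ℂ L)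
  have heV : ∀ h : H, e h = ((eH h : H) : V) := by
    intro h
    simpa using hep h
  -- e preserves the quotient map
  have hP4 : ∀ v : V, H.mkQ v = H.mkQ (e v) := by
    have hmaps : H.mkQ ∘ₗ e.toLinearMap = H.mkQ := by
      apply LinearMap.ext_on_codisjoint hL.codisjoint
      · intro x hx
        have h0 : H.mkQ x = 0 := (Submodule.Quotient.mk_eq_zero _).2 hx
        have h1 : e x = ((eH ⟨x, hx⟩ : H) : V) := heV ⟨x, hx⟩
        have h2 : H.mkQ ((eH ⟨x, hx⟩ : H) : V) = 0 :=
          (Submodule.Quotient.mk_eq_zero _).2 (eH ⟨x, hx⟩).2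
        simp only [LinearMap.comp_apply, LinearEquiv.coe_coe, h0, h1, h2]
      · intro y hy
        have h1 : e y = y := by simpa using heq ⟨y, hy⟩
        simp only [LinearMap.comp_apply, LinearEquiv.coe_coe, h1]
    intro v
    exact (LinearMap.congr_fun hmaps v).symm
  refine ⟨e, LinearEquiv.refl ℂ X, eH, f, LinearEquiv.refl ℂ (V ⧸ H), 1, ?_, ?_, ?_, ?_, ?_, ?_⟩
  · intro x
    have hxH : (x : V) ∈ H := hXH x.2
    have hmem : (⟨(x : V), hxH⟩ : H) ∈ X.comap H.subtype := by
      simp only [Submodule.mem_comap, Submodule.coe_subtype]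
      exact x.2
    have h1 : e ((⟨(x : V), hxH⟩ : H) : V) = ((eH ⟨(x : V), hxH⟩ : H) : V) := heV _
    have h2 : eH ⟨(x : V), hxH⟩ = ⟨(x : V), hxH⟩ := heHX' _ hmem
    simp only [LinearEquiv.refl_apply]
    rw [show e (x : V) = e ((⟨(x : V), hxH⟩ : H) : V) from rfl, h1, h2]
  · intro h
    exact (heV h).symm
  · exact hP2
  · intro v
    simpa using hP4 v
  · refine LinearMap.ext fun x => ?_
    obtain ⟨cc, rfl⟩ := hx₀span x
    simp only [LinearMap.smul_apply, LinearMap.comp_apply, LinearEquiv.coe_coe,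
      LinearEquiv.refl_symm, LinearEquiv.refl_apply, Units.val_one, one_smul, map_smul]
    rw [hfw]
  · refine LinearMap.ext fun w => ?_
    simp only [LinearMap.smul_apply, LinearMap.comp_apply, LinearEquiv.coe_coe,
      LinearEquiv.refl_apply, Units.val_one, one_smul]
    have := LinearMap.congr_fun hfcomp (f.symm w)
    simp only [LinearMap.comp_apply, LinearEquiv.coe_coe, LinearEquiv.apply_symm_apply] at this
    exact this
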